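/- If the set-valued predictor C : 𝒳 → Finset 𝒴 satisfies P(Y ∈ C(X)) = 1, then H(Y|X) ≤ E[log|C(X)|] ≤ log E[|C(X)|], where E[log|C(X)|] = ∑_x μ_X(x)·log|C(x)| (for every x in the support of μ_X the set C(x) is nonempty, and terms with μ_X(x) = 0 contribute zero). -/

import Mathlib

open Finset

lemma aux_zero_off {𝒴 : Type*} [Fintype 𝒴] (f : 𝒴 → ℝ) (hf : ∀ y, 0 ≤ f y)
    (S : Finset 𝒴) (hsupp : ∀ y, y ∉ S → f y = 0)
    (y : 𝒴) (hy : y ∉ S.filter (fun y => 0 < f y)) : f y = 0 := by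
  by_contra h0
  have hpos : 0 < f y := lt_of_le_of_ne (hf y) (Ne.symm h0)
  have hyS : y ∈ S := by
    by_contra hyS
    exact h0 (hsupp y hyS)
  exact hy (Finset.mem_filter.mpr ⟨hyS, hpos⟩)

/-- Per-point entropy bound. -/
lemma aux_entropy_le {𝒴 : Type*} [Fintype 𝒴] (f : 𝒴 → ℝ) (hf : ∀ y, 0 ≤ f y)
    (S : Finset 𝒴) (hsupp : ∀ y, y ∉ S → f y = 0)
    (s : ℝ) (hs : s = ∑ y, f y) (hspos : 0 < s) :
    -∑ y, f y * Real.log (f y / s) ≤ s * Real.log (S.card : ℝ) := by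
  classical
  set t : Finset 𝒴 := S.filter (fun y => 0 < f y) with ht
  have htsub : t ⊆ S := Finset.filter_subset _ _
  have hzero : ∀ y, y ∉ t → f y = 0 := aux_zero_off f hf S hsupp
  have hpos : ∀ y ∈ t, 0 < f y := fun y hy => (Finset.mem_filter.mp hy).2
  have hsum_t : ∑ y ∈ t, f y = s := by
    rw [hs]
    exact Finset.sum_subset (Finset.subset_univ t) (fun y _ hy => hzero y hy)
  have htne : t.Nonempty := by
    by_contra h
    rw [Finset.not_nonempty_iff_eq_empty] at h
    rw [h, Finset.sum_empty] at hsum_t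
    exact hspos.ne hsum_t
  -- rewrite LHS
  have hLHS : -∑ y, f y * Real.log (f y / s) = ∑ y ∈ t, f y * Real.log (s / f y) := by
    have h1 : ∑ y ∈ t, f y * Real.log (f y / s) = ∑ y, f y * Real.log (f y / s) :=
      Finset.sum_subset (Finset.subset_univ t) (fun y _ hy => by simp [hzero y hy])
    rw [← h1, ← Finset.sum_neg_distrib]
    apply Finset.sum_congr rfl
    intro y hy
    have h2 : f y ≠ 0 := (hpos y hy).ne'
    rw [Real.log_div h2 hspos.ne', Real.log_div hspos.ne' h2]
    ring
  rw [hLHS]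
  -- Jensen
  have hjen := (strictConcaveOn_log_Ioi.concaveOn).le_map_sum
    (t := t) (w := fun y => f y / s) (p := fun y => s / f y)
    (fun y _ => div_nonneg (hf y) hspos.le)
    (by rw [← Finset.sum_div, hsum_t, div_self hspos.ne'])
    (fun y hy => Set.mem_Ioi.mpr (by
      have := hpos y hy
      positivity))
  have hval : ∑ y ∈ t, (f y / s) • (s / f y) = (t.card : ℝ) := by
    rw [Finset.card_eq_sum_ones t]
    push_cast
    apply Finset.sum_congr rfl
    intro y hy
    have h1 : f y ≠ 0 := (hpos y hy).ne'
    rw [smul_eq_mul, div_mul_div_comm, mul_comm (f y) s, div_self (mul_ne_zero hspos.ne' h1)]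
  rw [hval] at hjen
  have step1 : ∑ y ∈ t, f y * Real.log (s / f y) ≤ s * Real.log (t.card : ℝ) := by
    have h2 := mul_le_mul_of_nonneg_left hjen hspos.le
    calc ∑ y ∈ t, f y * Real.log (s / f y)
        = s * ∑ y ∈ t, (f y / s) • Real.log (s / f y) := by
          rw [Finset.mul_sum]
          apply Finset.sum_congr rfl
          intro y _
          rw [smul_eq_mul]
          field_simp
      _ ≤ s * Real.log (t.card : ℝ) := h2
  refine step1.trans (mul_le_mul_of_nonneg_left ?_ hspos.le)
  have h1 : (1 : ℝ) ≤ (t.card : ℝ) := by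
    exact_mod_cast Finset.card_pos.mpr htne
  exact Real.log_le_log (by linarith) (by exact_mod_cast Finset.card_le_card htsub)

/-- For a probability mass function `μ` on `𝒳 × 𝒴` with coordinates `(X, Y)`,
if the set-valued predictor `C` has full coverage `P(Y ∈ C(X)) = 1`, then
`H(Y|X) ≤ E[log|C(X)|] ≤ log E[|C(X)|]`. -/
theorem conditional_entropy_le_expected_log_size_of_full_coverage
    {𝒳 𝒴 : Type*} [Fintype 𝒳] [Fintype 𝒴] [Nonempty 𝒳] [Nonempty 𝒴]
    (μ : 𝒳 → 𝒴 → ℝ)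
    (hμ0 : ∀ x y, 0 ≤ μ x y)
    (hμ1 : ∑ x, ∑ y, μ x y = 1)
    (C : 𝒳 → Finset 𝒴)
    (hcov : ∑ x, ∑ y ∈ C x, μ x y = 1) :
    (-∑ x, ∑ y, μ x y * Real.log (μ x y / ∑ y', μ x y'))
        ≤ ∑ x, (∑ y, μ x y) * Real.log ((C x).card : ℝ)
      ∧ ∑ x, (∑ y, μ x y) * Real.log ((C x).card : ℝ)
        ≤ Real.log (∑ x, (∑ y, μ x y) * ((C x).card : ℝ)) := by
  classical
  -- support: μ x y = 0 for y ∉ C x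
  have hsupp : ∀ x y, y ∉ C x → μ x y = 0 := by
    have hz : ∑ x, ∑ y ∈ (C x)ᶜ, μ x y = 0 := by
      have hsplit : ∀ x : 𝒳, ∑ y, μ x y = ∑ y ∈ C x, μ x y + ∑ y ∈ (C x)ᶜ, μ x y := by
        intro x
        rw [Finset.sum_add_sum_compl (C x) (μ x)]
      have h := hμ1
      simp_rw [hsplit] at h
      rw [Finset.sum_add_distrib, hcov] at h
      linarith
    intro x y hy
    have h1 : ∀ x ∈ (Finset.univ : Finset 𝒳), 0 ≤ ∑ y ∈ (C x)ᶜ, μ x y :=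
      fun x _ => Finset.sum_nonneg (fun y _ => hμ0 x y)
    have h2 := (Finset.sum_eq_zero_iff_of_nonneg h1).mp hz x (Finset.mem_univ x)
    exact (Finset.sum_eq_zero_iff_of_nonneg (fun y _ => hμ0 x y)).mp h2 y
      (Finset.mem_compl.mpr hy)
  have hg0 : ∀ x, 0 ≤ ∑ y, μ x y := fun x => Finset.sum_nonneg (fun y _ => hμ0 x y)
  have hCne : ∀ x, 0 < ∑ y, μ x y → (C x).Nonempty := by
    intro x hx
    by_contra h
    rw [Finset.not_nonempty_iff_eq_empty] at h
    have hz : ∑ y, μ x y = 0 := by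
      apply Finset.sum_eq_zero
      intro y _
      exact hsupp x y (by simp [h])
    exact hx.ne' hz
  constructor
  · -- first inequality: termwise via aux_entropy_le
    rw [← Finset.sum_neg_distrib]
    apply Finset.sum_le_sum
    intro x _
    by_cases hx : ∑ y, μ x y = 0
    · have hall : ∀ y, μ x y = 0 := fun y =>
        (Finset.sum_eq_zero_iff_of_nonneg (fun y _ => hμ0 x y)).mp hx y (Finset.mem_univ y)
      simp [hall, hx]
    · exact aux_entropy_le (μ x) (hμ0 x) (C x) (hsupp x) _ rfl
        (lt_of_le_of_ne (hg0 x) (Ne.symm hx))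
  · -- second inequality: Jensen over x
    set u : Finset 𝒳 := Finset.univ.filter (fun x => 0 < ∑ y, μ x y) with hu
    have hzero : ∀ x, x ∉ u → ∑ y, μ x y = 0 := by
      intro x hx
      by_contra h0
      exact hx (Finset.mem_filter.mpr ⟨Finset.mem_univ x,
        lt_of_le_of_ne (hg0 x) (Ne.symm h0)⟩)
    have hjen := (strictConcaveOn_log_Ioi.concaveOn).le_map_sum
      (t := u) (w := fun x => ∑ y, μ x y) (p := fun x => ((C x).card : ℝ))
      (fun x _ => hg0 x)
      (by rw [Finset.sum_subset (Finset.subset_univ u) (fun x _ hx => hzero x hx), hμ1])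
      (fun x hx => Set.mem_Ioi.mpr (by
        have := hCne x (Finset.mem_filter.mp hx).2
        show (0:ℝ) < ((C x).card : ℝ)
        exact_mod_cast Finset.card_pos.mpr this))
    simp only [smul_eq_mul] at hjen
    calc ∑ x, (∑ y, μ x y) * Real.log ((C x).card : ℝ)
        = ∑ x ∈ u, (∑ y, μ x y) * Real.log ((C x).card : ℝ) :=
          (Finset.sum_subset (Finset.subset_univ u)
            (fun x _ hx => by rw [hzero x hx, zero_mul])).symm
      _ ≤ Real.log (∑ x ∈ u, (∑ y, μ x y) * ((C x).card : ℝ)) := hjen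
      _ = Real.log (∑ x, (∑ y, μ x y) * ((C x).card : ℝ)) := by
          rw [Finset.sum_subset (Finset.subset_univ u)
            (fun x _ hx => by rw [hzero x hx, zero_mul])]
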